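/- Let q ∈ [−1,1], define β_n² = ∑_{j=0}^{n} q^j for n ≥ 0 with β_n ≥ 0, and let C = ∑_{n=0}^{L-1} β_n |e_n⟩⟨e_{n+1}| on ℂ^{L+1}. Then with N_C = C† C, the identity [N_C, C] = −C + (1−q) N_C C holds. -/

import Mathlib

open Matrix

theorem TQ_number_commutator (L : ℕ) (q : ℝ) (hq1 : -1 ≤ q) (hq2 : q ≤ 1)
    (β : ℕ → ℝ) (hβ : ∀ n, β n = Real.sqrt (∑ j ∈ Finset.range (n+1), q ^ j))
    (C : Matrix (Fin (L+1)) (Fin (L+1)) ℂ)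
    (hC : C = ∑ n : Fin L, ((β n : ℝ) : ℂ) •
      Matrix.single n.castSucc n.succ 1)
    (N : Matrix (Fin (L+1)) (Fin (L+1)) ℂ) (hN : N = Cᴴ * C) :
    N * C - C * N = -C + ((1 - q : ℝ) : ℂ) • (N * C) := by
  set a : ℕ → ℝ := fun n => ∑ j ∈ Finset.range n, q ^ j with ha
  have hnn : ∀ n, 0 ≤ a n := by
    intro n
    rcases le_or_gt 0 q with h | h
    · exact Finset.sum_nonneg fun j _ => pow_nonneg h j
    · have key : ∀ m, 0 ≤ a m ∧ a m ≤ 1 := by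
        intro m
        induction m with
        | zero => simp [ha]
        | succ k ih =>
          have hs : a (k+1) = q * a k + 1 := geom_sum_succ
          constructor <;> nlinarith [ih.1, ih.2]
      exact (key n).1
  have hb2 : ∀ n, (β n)^2 = a (n+1) := by
    intro n
    rw [hβ]
    exact Real.sq_sqrt (hnn _)
  -- entries of C
  have hCe : ∀ i j : Fin (L+1), C i j =
      if (i : ℕ) + 1 = (j : ℕ) then ((β i : ℝ) : ℂ) else 0 := by
    intro i j
    rw [hC, Matrix.sum_apply]
    simp only [Matrix.smul_apply, Matrix.single, Matrix.of_apply, smul_eq_mul,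
      mul_ite, mul_one, mul_zero]
    by_cases h : (i : ℕ) + 1 = (j : ℕ)
    · have hiL : (i : ℕ) < L := by omega
      rw [Finset.sum_eq_single (⟨(i : ℕ), hiL⟩ : Fin L)]
      · rw [if_pos ⟨Fin.ext (by simp), Fin.ext (by simp [h])⟩, if_pos h]
      · intro n _ hn
        rw [if_neg]
        rintro ⟨h1, h2⟩
        apply hn
        apply Fin.ext
        simpa using congrArg Fin.val h1
      · intro hmem; exact absurd (Finset.mem_univ _) hmem
    · rw [if_neg h, Finset.sum_eq_zero]
      intro n _
      rw [if_neg]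
      rintro ⟨h1, h2⟩
      apply h
      have e1 : (n : ℕ) = (i : ℕ) := by simpa using congrArg Fin.val h1
      have e2 : (n : ℕ) + 1 = (j : ℕ) := by simpa using congrArg Fin.val h2
      omega
  -- N is diagonal
  have hNe : N = Matrix.diagonal (fun i : Fin (L+1) => ((a (i : ℕ) : ℝ) : ℂ)) := by
    rw [hN]
    ext i k
    rw [Matrix.mul_apply]
    simp only [Matrix.conjTranspose_apply, hCe]
    by_cases hik : i = k
    · subst hik
      rw [Matrix.diagonal_apply_eq]
      have hterm : ∀ m : Fin (L+1),
          star (if (m : ℕ) + 1 = (i : ℕ) then ((β m : ℝ) : ℂ) else 0) *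
            (if (m : ℕ) + 1 = (i : ℕ) then ((β m : ℝ) : ℂ) else 0) =
          if (m : ℕ) + 1 = (i : ℕ) then (((β m)^2 : ℝ) : ℂ) else 0 := by
        intro m
        split_ifs with h
        · rw [Complex.star_def, Complex.conj_ofReal]
          push_cast
          ring
        · simp
      rw [Finset.sum_congr rfl fun m _ => hterm m]
      by_cases h0 : (i : ℕ) = 0
      · have hz : ((a (i : ℕ) : ℝ) : ℂ) = 0 := by rw [h0]; simp [ha]
        rw [hz]
        refine Finset.sum_eq_zero fun m _ => ?_
        rw [if_neg (by omega)]
      · obtain ⟨t, ht⟩ : ∃ t, (i : ℕ) = t + 1 := ⟨(i : ℕ) - 1, by omega⟩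
        have htL : t < L + 1 := by have := i.isLt; omega
        rw [Finset.sum_eq_single (⟨t, htL⟩ : Fin (L+1))]
        · simp only [Fin.val_mk]
          rw [if_pos (by omega), hb2, ht]
        · intro m _ hm
          have hne : ¬ ((m : ℕ) + 1 = (i : ℕ)) := by
            intro hc
            exact hm (Fin.ext (by simp only [Fin.val_mk]; omega))
          rw [if_neg hne]
        · intro hmem; exact absurd (Finset.mem_univ _) hmem
    · rw [Matrix.diagonal_apply_ne _ hik, Finset.sum_eq_zero]
      intro m _
      by_cases h1 : (m : ℕ) + 1 = (k : ℕ)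
      · have h2 : ¬ ((m : ℕ) + 1 = (i : ℕ)) := by
          intro hc
          exact hik (Fin.ext (by omega))
        rw [if_neg h2]
        simp
      · rw [if_neg h1, mul_zero]
  -- geometric facts
  have hgeom : ∀ n : ℕ, (1 - q) * a n = 1 - q ^ n := by
    intro n
    have := geom_sum_mul q n
    have : a n * (q - 1) = q ^ n - 1 := this
    nlinarith [this]
  have hstep : ∀ n : ℕ, a (n + 1) = a n + q ^ n := by
    intro n
    simp [ha, Finset.sum_range_succ]
  -- conclude entrywise
  rw [hNe]
  ext i j
  simp only [Matrix.sub_apply, Matrix.add_apply, Matrix.neg_apply, Matrix.smul_apply,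
    Matrix.diagonal_mul, Matrix.mul_diagonal, smul_eq_mul, hCe]
  by_cases h : (i : ℕ) + 1 = (j : ℕ)
  · rw [if_pos h]
    have hj : a (j : ℕ) = a (i : ℕ) + q ^ (i : ℕ) := by rw [← h, hstep]
    rw [hj]
    have hg := hgeom (i : ℕ)
    push_cast
    have : ((1:ℂ) - q) * a (i : ℕ) = 1 - (q : ℂ) ^ (i : ℕ) := by
      exact_mod_cast congrArg (fun x : ℝ => (x : ℂ)) hg
    linear_combination (-((β (i : ℕ) : ℝ) : ℂ)) * this
  · rw [if_neg h]
    ring
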